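/- arXiv:2105.08868 — 3 statements merged into one kernel-verified Lean document; each statement's English description precedes it below -/
import Mathlib

section
/- (Lemma 1.) Under the mth-order Markov model, for every integer k with 1 < k ≤ K − m − 1, the block of response indicators R̄ᵐₖ = (R_{max(1,k−m)},…,R_{k−1}) is conditionally independent of O_{k+m+1} given (Ȳᵐₖ, O̲^{m+1}_{k−1}) = (Y_{max(1,k−m)},…,Y_{k−1}, O_k,…,O_{k+m}). -/
open scoped Classical BigOperators

namespace MRM

/-- Observed datum at index `j`: `some (y j)` if `r j = true` (observed), otherwise `none`
(missing, i.e. the value `?`). -/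
def obs {K : ℕ} (y r : Fin K → Bool) (j : Fin K) : Option Bool :=
  if r j then some (y j) else none

/-- Probability of an event under the joint pmf `p` on outcomes and response indicators. -/
noncomputable def Pr {K : ℕ} (p : (Fin K → Bool) → (Fin K → Bool) → ℝ)
    (E : (Fin K → Bool) → (Fin K → Bool) → Prop) : ℝ :=
  ∑ y : Fin K → Bool, ∑ r : Fin K → Bool, if E y r then p y r else 0

/-- Conditional probability `P(A | C)` under `p`. -/
noncomputable def cPr {K : ℕ} (p : (Fin K → Bool) → (Fin K → Bool) → ℝ)
    (A C : (Fin K → Bool) → (Fin K → Bool) → Prop) : ℝ :=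
  Pr p (fun y r => A y r ∧ C y r) / Pr p C

/-- Event: the outcomes at the 1-based positions `lo ≤ pos ≤ hi` take the values `yv pos`.
(If `hi < lo`, or the window is out of range, this is the trivial event, matching the
convention that a vector whose lower index exceeds its upper index is the null vector.) -/
def Yeq {K : ℕ} (lo hi : ℕ) (yv : ℕ → Bool) :
    (Fin K → Bool) → (Fin K → Bool) → Prop :=
  fun y _ => ∀ j : Fin K, lo ≤ j.1 + 1 → j.1 + 1 ≤ hi → y j = yv (j.1 + 1)

/-- Event: the response indicators at positions `lo ≤ pos ≤ hi` take the values `rv pos`. -/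
def Req {K : ℕ} (lo hi : ℕ) (rv : ℕ → Bool) :
    (Fin K → Bool) → (Fin K → Bool) → Prop :=
  fun _ r => ∀ j : Fin K, lo ≤ j.1 + 1 → j.1 + 1 ≤ hi → r j = rv (j.1 + 1)

/-- Event: the observed data at positions `lo ≤ pos ≤ hi` take the values `ov pos`. -/
def Oeq {K : ℕ} (lo hi : ℕ) (ov : ℕ → Option Bool) :
    (Fin K → Bool) → (Fin K → Bool) → Prop :=
  fun y r => ∀ j : Fin K, lo ≤ j.1 + 1 → j.1 + 1 ≤ hi → obs y r j = ov (j.1 + 1)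

/-- The `m`-th order Markov model:
`p(y, r) = ∏ₖ aₖ(yₖ | ȳᵐₖ) · bₖ(rₖ | ȳᵐₖ, yₖ, o̲ᵐₖ)`, where `aₖ` and `bₖ` are strictly
positive conditional pmfs in their first argument, `aₖ` depends only on the outcomes at
1-based positions `max(1, k − m), …, k`, and `bₖ` depends only on `rₖ`, the outcomes at
positions `max(1, k − m), …, k` and the observed data at positions `k + 1, …, min(k + m, K)`.
Indices of `Fin K` are 0-based, so the 1-based paper position of `k : Fin K` is `k.1 + 1`. -/
structure Markov (K m : ℕ) where
  p : (Fin K → Bool) → (Fin K → Bool) → ℝ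
  a : Fin K → (Fin K → Bool) → ℝ
  b : Fin K → (Fin K → Bool) → (Fin K → Bool) → ℝ
  a_pos : ∀ k y, 0 < a k y
  b_pos : ∀ k y r, 0 < b k y r
  a_pmf : ∀ (k : Fin K) (y : Fin K → Bool), ∑ v : Bool, a k (Function.update y k v) = 1
  b_pmf : ∀ (k : Fin K) (y r : Fin K → Bool), ∑ v : Bool, b k y (Function.update r k v) = 1
  a_local : ∀ (k : Fin K) (y y' : Fin K → Bool),
    (∀ j : Fin K, k.1 + 1 - m ≤ j.1 + 1 → j.1 ≤ k.1 → y j = y' j) → a k y = a k y'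
  b_local : ∀ (k : Fin K) (y r y' r' : Fin K → Bool), r k = r' k →
    (∀ j : Fin K, k.1 + 1 - m ≤ j.1 + 1 → j.1 ≤ k.1 → y j = y' j) →
    (∀ j : Fin K, k.1 < j.1 → j.1 + 1 ≤ k.1 + 1 + m → obs y r j = obs y' r' j) →
    b k y r = b k y' r'
  factor : ∀ y r, p y r = ∏ k : Fin K, a k y * b k y r
  sum_one : ∑ y : Fin K → Bool, ∑ r : Fin K → Bool, p y r = 1

/-- Real value of a binary outcome. -/
def yVal (v : Bool) : ℝ := if v then 1 else 0

/-- `cₖ(ȳᵐₖ, o̲ᵐₖ; α) = E[exp(α Yₖ) | Rₖ = 1, Ȳᵐₖ = ȳᵐₖ, O̲ᵐₖ = o̲ᵐₖ]` (`k` is 1-based). -/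
noncomputable def cfun {K : ℕ} (p : (Fin K → Bool) → (Fin K → Bool) → ℝ) (m : ℕ) (α : ℝ)
    (k : ℕ) (yv : ℕ → Bool) (ov : ℕ → Option Bool) : ℝ :=
  ∑ v : Bool, Real.exp (α * yVal v) *
    cPr p (Yeq k k (fun _ => v))
      (fun y r => Req k k (fun _ => true) y r ∧ Yeq (k - m) (k - 1) yv y r ∧
        Oeq (k + 1) (k + m) ov y r)

/-- The exponential tilting restriction with sensitivity parameters `α k` (`k` is 1-based):
`f(Yₖ | Rₖ = 0, Ȳᵐₖ, O̲ᵐₖ) = f(Yₖ | Rₖ = 1, Ȳᵐₖ, O̲ᵐₖ) · exp(αₖ Yₖ) / cₖ(Ȳᵐₖ, O̲ᵐₖ; αₖ)`. -/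
def Tilt {K : ℕ} (p : (Fin K → Bool) → (Fin K → Bool) → ℝ) (m : ℕ) (α : ℕ → ℝ) : Prop :=
  ∀ (k : ℕ), 1 ≤ k → k ≤ K → ∀ (yv : ℕ → Bool) (ov : ℕ → Option Bool),
    cPr p (Yeq k k yv)
      (fun y r => Req k k (fun _ => false) y r ∧ Yeq (k - m) (k - 1) yv y r ∧
        Oeq (k + 1) (k + m) ov y r)
    = cPr p (Yeq k k yv)
        (fun y r => Req k k (fun _ => true) y r ∧ Yeq (k - m) (k - 1) yv y r ∧
          Oeq (k + 1) (k + m) ov y r)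
      * Real.exp (α k * yVal (yv k)) / cfun p m (α k) k yv ov

/-! ### Auxiliary machinery for Lemma 1 -/

/-- Glue two configurations at (1-based) cut `k`: positions `< k` from the first function,
positions `≥ k` from the second. -/
def glue {K : ℕ} (k : ℕ) (f g : Fin K → Bool) : Fin K → Bool :=
  fun j => if j.1 + 1 < k then f j else g j

lemma glue_lt {K : ℕ} (k : ℕ) (f g : Fin K → Bool) (j : Fin K) (h : j.1 + 1 < k) :
    glue k f g j = f j := if_pos h

lemma glue_ge {K : ℕ} (k : ℕ) (f g : Fin K → Bool) (j : Fin K) (h : ¬ j.1 + 1 < k) :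
    glue k f g j = g j := if_neg h

lemma glue_glue {K : ℕ} (k : ℕ) (f g : Fin K → Bool) :
    glue k (glue k f g) (glue k g f) = f := by
  funext j
  by_cases h : j.1 + 1 < k <;> simp [glue, h]

lemma obs_glue_lt {K : ℕ} (k : ℕ) (y y' r r' : Fin K → Bool) (j : Fin K)
    (h : j.1 + 1 < k) :
    obs (glue k y y') (glue k r r') j = obs y r j := by
  simp [obs, glue, h]

lemma obs_glue_ge {K : ℕ} (k : ℕ) (y y' r r' : Fin K → Bool) (j : Fin K)
    (h : ¬ j.1 + 1 < k) :
    obs (glue k y y') (glue k r r') j = obs y' r' j := by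
  simp [obs, glue, h]

/-- The key "swap" identity: if two configurations agree on the outcomes at positions
`k − m, …, k − 1` and the observed data at positions `k, …, k + m`, then swapping their
tails at the cut `k` preserves the product of their probabilities. -/
lemma swap {K m : ℕ} (M : Markov K m) (k : ℕ) (y r y' r' : Fin K → Bool)
    (hy : ∀ j : Fin K, k - m ≤ j.1 + 1 → j.1 + 1 ≤ k - 1 → y j = y' j)
    (ho : ∀ j : Fin K, k ≤ j.1 + 1 → j.1 + 1 ≤ k + m → obs y r j = obs y' r' j) :
    M.p (glue k y y') (glue k r r') * M.p (glue k y' y) (glue k r' r)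
      = M.p y r * M.p y' r' := by
  rw [M.factor, M.factor, M.factor, M.factor, ← Finset.prod_mul_distrib,
      ← Finset.prod_mul_distrib]
  refine Finset.prod_congr rfl fun j _ => ?_
  by_cases hj : j.1 + 1 < k
  · have ha1 : M.a j (glue k y y') = M.a j y :=
      M.a_local j _ _ fun i _ h2 => glue_lt _ _ _ _ (by omega)
    have ha2 : M.a j (glue k y' y) = M.a j y' :=
      M.a_local j _ _ fun i _ h2 => glue_lt _ _ _ _ (by omega)
    have hb1 : M.b j (glue k y y') (glue k r r') = M.b j y r := by
      refine M.b_local j _ _ _ _ (glue_lt _ _ _ _ hj)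
        (fun i _ h2 => glue_lt _ _ _ _ (by omega)) (fun i h1 h2 => ?_)
      by_cases hik : i.1 + 1 < k
      · exact obs_glue_lt _ _ _ _ _ _ hik
      · rw [obs_glue_ge _ _ _ _ _ _ hik]
        exact (ho i (by omega) (by omega)).symm
    have hb2 : M.b j (glue k y' y) (glue k r' r) = M.b j y' r' := by
      refine M.b_local j _ _ _ _ (glue_lt _ _ _ _ hj)
        (fun i _ h2 => glue_lt _ _ _ _ (by omega)) (fun i h1 h2 => ?_)
      by_cases hik : i.1 + 1 < k
      · exact obs_glue_lt _ _ _ _ _ _ hik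
      · rw [obs_glue_ge _ _ _ _ _ _ hik]
        exact ho i (by omega) (by omega)
    rw [ha1, ha2, hb1, hb2]
  · have ha1 : M.a j (glue k y y') = M.a j y' := by
      refine M.a_local j _ _ fun i h1 h2 => ?_
      by_cases hik : i.1 + 1 < k
      · rw [glue_lt _ _ _ _ hik]; exact hy i (by omega) (by omega)
      · exact glue_ge _ _ _ _ hik
    have ha2 : M.a j (glue k y' y) = M.a j y := by
      refine M.a_local j _ _ fun i h1 h2 => ?_
      by_cases hik : i.1 + 1 < k
      · rw [glue_lt _ _ _ _ hik]; exact (hy i (by omega) (by omega)).symm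
      · exact glue_ge _ _ _ _ hik
    have hb1 : M.b j (glue k y y') (glue k r r') = M.b j y' r' := by
      refine M.b_local j _ _ _ _ (glue_ge _ _ _ _ hj)
        (fun i h1 h2 => ?_) (fun i h1 h2 => obs_glue_ge _ _ _ _ _ _ (by omega))
      by_cases hik : i.1 + 1 < k
      · rw [glue_lt _ _ _ _ hik]; exact hy i (by omega) (by omega)
      · exact glue_ge _ _ _ _ hik
    have hb2 : M.b j (glue k y' y) (glue k r' r) = M.b j y r := by
      refine M.b_local j _ _ _ _ (glue_ge _ _ _ _ hj)
        (fun i h1 h2 => ?_) (fun i h1 h2 => obs_glue_ge _ _ _ _ _ _ (by omega))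
      by_cases hik : i.1 + 1 < k
      · rw [glue_lt _ _ _ _ hik]; exact (hy i (by omega) (by omega)).symm
      · exact glue_ge _ _ _ _ hik
    rw [ha1, ha2, hb1, hb2]; ring

lemma Req_glue {K : ℕ} {lo hi k : ℕ} (h : hi < k) (rv : ℕ → Bool)
    (y y' r r' : Fin K → Bool) :
    Req lo hi rv (glue k y y') (glue k r r') ↔ Req lo hi rv y r := by
  constructor <;> intro hh j h1 h2 <;> have h3 : j.1 + 1 < k := by omega
  · have := hh j h1 h2; rwa [glue_lt _ _ _ _ h3] at this
  · have := hh j h1 h2; rwa [← glue_lt k r r' j h3] at this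

lemma Yeq_glue {K : ℕ} {lo hi k : ℕ} (h : hi < k) (yv : ℕ → Bool)
    (y y' r r' : Fin K → Bool) :
    Yeq lo hi yv (glue k y y') (glue k r r') ↔ Yeq lo hi yv y r := by
  constructor <;> intro hh j h1 h2 <;> have h3 : j.1 + 1 < k := by omega
  · have := hh j h1 h2; rwa [glue_lt _ _ _ _ h3] at this
  · have := hh j h1 h2; rwa [← glue_lt k y y' j h3] at this

lemma Oeq_glue_lt {K : ℕ} {lo hi k : ℕ} (h : hi < k) (ov : ℕ → Option Bool)
    (y y' r r' : Fin K → Bool) :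
    Oeq lo hi ov (glue k y y') (glue k r r') ↔ Oeq lo hi ov y r := by
  constructor <;> intro hh j h1 h2 <;> have h3 : j.1 + 1 < k := by omega
  · have := hh j h1 h2; rwa [obs_glue_lt _ _ _ _ _ _ h3] at this
  · have := hh j h1 h2; rwa [← obs_glue_lt k y y' r r' j h3] at this

lemma Oeq_glue_ge {K : ℕ} {lo hi k : ℕ} (h : k ≤ lo) (ov : ℕ → Option Bool)
    (y y' r r' : Fin K → Bool) :
    Oeq lo hi ov (glue k y y') (glue k r r') ↔ Oeq lo hi ov y' r' := by
  constructor <;> intro hh j h1 h2 <;> have h3 : ¬ j.1 + 1 < k := by omega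
  · have := hh j h1 h2; rwa [obs_glue_ge _ _ _ _ _ _ h3] at this
  · have := hh j h1 h2; rwa [← obs_glue_ge k y y' r r' j h3] at this

lemma ite_mul_ite_zero {P Q : Prop} [Decidable P] [Decidable Q] (a b : ℝ) :
    (if P then a else 0) * (if Q then b else 0) = if P ∧ Q then a * b else 0 := by
  by_cases hp : P <;> by_cases hq : Q <;> simp [hp, hq]

lemma Pr_eq_sum_prod {K : ℕ} (p : (Fin K → Bool) → (Fin K → Bool) → ℝ)
    (E : (Fin K → Bool) → (Fin K → Bool) → Prop) :
    Pr p E = ∑ w : (Fin K → Bool) × (Fin K → Bool),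
      (if E w.1 w.2 then p w.1 w.2 else 0) := by
  rw [Pr]
  exact (Fintype.sum_prod_type
    (fun w : (Fin K → Bool) × (Fin K → Bool) => if E w.1 w.2 then p w.1 w.2 else 0)).symm

lemma Pr_mul_Pr {K : ℕ} (p : (Fin K → Bool) → (Fin K → Bool) → ℝ)
    (E F : (Fin K → Bool) → (Fin K → Bool) → Prop) :
    Pr p E * Pr p F
      = ∑ x : ((Fin K → Bool) × (Fin K → Bool)) × ((Fin K → Bool) × (Fin K → Bool)),
          (if E x.1.1 x.1.2 ∧ F x.2.1 x.2.2 then p x.1.1 x.1.2 * p x.2.1 x.2.2 else 0) := by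
  rw [Pr_eq_sum_prod, Pr_eq_sum_prod, Finset.sum_mul_sum]
  rw [← Fintype.sum_prod_type
    (fun x : ((Fin K → Bool) × (Fin K → Bool)) × ((Fin K → Bool) × (Fin K → Bool)) =>
      (if E x.1.1 x.1.2 then p x.1.1 x.1.2 else 0) * (if F x.2.1 x.2.2 then p x.2.1 x.2.2 else 0))]
  exact Finset.sum_congr rfl fun x _ => ite_mul_ite_zero _ _

lemma condIndep_of_key {K : ℕ} (p : (Fin K → Bool) → (Fin K → Bool) → ℝ)
    (A B C : (Fin K → Bool) → (Fin K → Bool) → Prop) (hC : Pr p C ≠ 0)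
    (key : Pr p (fun y r => (A y r ∧ B y r) ∧ C y r) * Pr p C
      = Pr p (fun y r => A y r ∧ C y r) * Pr p (fun y r => B y r ∧ C y r)) :
    cPr p (fun y r => A y r ∧ B y r) C = cPr p A C * cPr p B C := by
  rw [cPr, cPr, cPr, div_mul_div_comm, div_eq_div_iff hC (mul_ne_zero hC hC)]
  linear_combination Pr p C * key

/-- **Lemma 1.** Under the `m`th-order Markov model, for every integer `k` with
`1 < k ≤ K − m − 1`, the block `R̄ᵐₖ = (R_{max(1,k−m)}, …, R_{k−1})` is conditionally
independent of `O_{k+m+1}` given `(Ȳᵐₖ, O̲^{m+1}_{k−1}) = (Y_{max(1,k−m)}, …, Y_{k−1},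
O_k, …, O_{k+m})`. -/
theorem statement1 (K m : ℕ) (hm : 1 ≤ m) (hKm : 2 * m + 1 < K) (M : Markov K m)
    (k : ℕ) (hk1 : 1 < k) (hk2 : k ≤ K - m - 1)
    (rv : ℕ → Bool) (ovB : ℕ → Option Bool) (yv : ℕ → Bool) (ovC : ℕ → Option Bool)
    (hC : 0 < Pr M.p (fun y r => Yeq (k - m) (k - 1) yv y r ∧ Oeq k (k + m) ovC y r)) :
    cPr M.p (fun y r => Req (k - m) (k - 1) rv y r ∧ Oeq (k + m + 1) (k + m + 1) ovB y r)
        (fun y r => Yeq (k - m) (k - 1) yv y r ∧ Oeq k (k + m) ovC y r)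
      = cPr M.p (Req (k - m) (k - 1) rv)
          (fun y r => Yeq (k - m) (k - 1) yv y r ∧ Oeq k (k + m) ovC y r)
        * cPr M.p (Oeq (k + m + 1) (k + m + 1) ovB)
            (fun y r => Yeq (k - m) (k - 1) yv y r ∧ Oeq k (k + m) ovC y r) := by
  refine condIndep_of_key M.p (Req (k - m) (k - 1) rv) (Oeq (k + m + 1) (k + m + 1) ovB)
    (fun y r => Yeq (k - m) (k - 1) yv y r ∧ Oeq k (k + m) ovC y r) (ne_of_gt hC) ?_
  rw [Pr_mul_Pr, Pr_mul_Pr]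
  have hinv : Function.Involutive
      (fun x : ((Fin K → Bool) × (Fin K → Bool)) × ((Fin K → Bool) × (Fin K → Bool)) =>
        ((glue k x.1.1 x.2.1, glue k x.1.2 x.2.2), (glue k x.2.1 x.1.1, glue k x.2.2 x.1.2))) := by
    rintro ⟨⟨y, r⟩, y', r'⟩
    simp only [Prod.mk.injEq]
    exact ⟨⟨glue_glue k y y', glue_glue k r r'⟩, glue_glue k y' y, glue_glue k r' r⟩
  refine Fintype.sum_equiv hinv.toPerm _ _ ?_
  rintro ⟨⟨y, r⟩, y', r'⟩
  simp only [Function.Involutive.coe_toPerm]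
  have hiff :
      ((Req (k - m) (k - 1) rv (glue k y y') (glue k r r') ∧
          (Yeq (k - m) (k - 1) yv (glue k y y') (glue k r r') ∧
            Oeq k (k + m) ovC (glue k y y') (glue k r r'))) ∧
        (Oeq (k + m + 1) (k + m + 1) ovB (glue k y' y) (glue k r' r) ∧
          (Yeq (k - m) (k - 1) yv (glue k y' y) (glue k r' r) ∧
            Oeq k (k + m) ovC (glue k y' y) (glue k r' r))))
      ↔ (((Req (k - m) (k - 1) rv y r ∧ Oeq (k + m + 1) (k + m + 1) ovB y r) ∧
            (Yeq (k - m) (k - 1) yv y r ∧ Oeq k (k + m) ovC y r)) ∧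
          (Yeq (k - m) (k - 1) yv y' r' ∧ Oeq k (k + m) ovC y' r')) := by
    rw [Req_glue (by omega) rv y y' r r', Yeq_glue (by omega) yv y y' r r',
        Oeq_glue_ge (le_refl k) ovC y y' r r', Oeq_glue_ge (by omega) ovB y' y r' r,
        Yeq_glue (by omega) yv y' y r' r, Oeq_glue_ge (le_refl k) ovC y' y r' r]
    tauto
  by_cases hc : (((Req (k - m) (k - 1) rv y r ∧ Oeq (k + m + 1) (k + m + 1) ovB y r) ∧
      (Yeq (k - m) (k - 1) yv y r ∧ Oeq k (k + m) ovC y r)) ∧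
      (Yeq (k - m) (k - 1) yv y' r' ∧ Oeq k (k + m) ovC y' r'))
  · rw [if_pos hc]
    have hc' := hiff.mpr hc
    obtain ⟨⟨_, hYw, hOw⟩, hYw', hOw'⟩ := hc
    exact (swap M k y r y' r' (fun j h1 h2 => (hYw j h1 h2).trans (hYw' j h1 h2).symm)
      (fun j h1 h2 => (hOw j h1 h2).trans (hOw' j h1 h2).symm)).symm.trans (if_pos hc').symm
  · rw [if_neg hc]
    exact (if_neg (fun h => hc (hiff.mp h))).symm

end MRM
end

section
/- (Lemma 3, recursive identity.) Under the mth-order Markov model together with the exponential tilting restriction, for every k = 1,…,K and all values of the variables, f(Ȳ^{m+1}_{k+1}, O̲^{m+1}_{k}) = [ f(O_{k+m+1} | Rₖ = 1, Ȳ^{m+1}_{k+1}, O̲ᵐₖ) ]^{1(k ≤ K−m−1)} · f(Yₖ | Rₖ = 1, Ȳᵐₖ, O̲ᵐₖ) · { P(Rₖ = 1 | Ȳᵐₖ, O̲ᵐₖ) + P(Rₖ = 0 | Ȳᵐₖ, O̲ᵐₖ) · exp(αₖ Yₖ) / cₖ(Ȳᵐₖ, O̲ᵐₖ; αₖ) }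 · f(Ȳᵐₖ, O̲ᵐₖ), where 1(·) is the indicator function (the bracketed factor is omitted when k > K−m−1), Ȳ^{m+1}_{k+1} = (Y_{max(1,k−m)},…,Yₖ), O̲^{m+1}_k = (O_{k+1},…,O_{min(k+m+1,K)}), Ȳᵐₖ = (Y_{max(1,k−m)},…,Y_{k−1}) and O̲ᵐₖ = (O_{k+1},…,O_{min(k+m,K)}). -/
open scoped Classical BigOperators

namespace MRM

/-! ### Auxiliary lemmas -/

section Aux

variable {K m : ℕ}

noncomputable def ind (P : Prop) (x : ℝ) : ℝ := if P then x else 0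

lemma ind_of_pos {P : Prop} (h : P) (x : ℝ) : ind P x = x := by simp [ind, h]

lemma ind_mul_ind_zero {X Y : Prop} (a b : ℝ) (h : ¬ (X ∧ Y)) :
    ind X a * ind Y b = 0 := by
  by_cases hx : X
  · by_cases hy : Y
    · exact absurd ⟨hx, hy⟩ h
    · simp [ind, hx, hy]
  · simp [ind, hx]

lemma Pr_congr (p : (Fin K → Bool) → (Fin K → Bool) → ℝ)
    {A B : (Fin K → Bool) → (Fin K → Bool) → Prop}
    (h : ∀ y r, A y r ↔ B y r) : Pr p A = Pr p B := by
  unfold Pr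
  refine Finset.sum_congr rfl fun y _ => Finset.sum_congr rfl fun r _ => ?_
  simp only [h y r]

lemma Pr_pos {p : (Fin K → Bool) → (Fin K → Bool) → ℝ} (hp : ∀ y r, 0 < p y r)
    {A : (Fin K → Bool) → (Fin K → Bool) → Prop} (h : ∃ y r, A y r) : 0 < Pr p A := by
  obtain ⟨y0, r0, h0⟩ := h
  have hterm : ∀ (y r : Fin K → Bool), 0 ≤ (if A y r then p y r else 0) := by
    intro y r
    by_cases hA : A y r
    · simp [hA, (hp y r).le]
    · simp [hA]
  have hinner : 0 < ∑ r : Fin K → Bool, if A y0 r then p y0 r else 0 := by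
    refine Finset.sum_pos' (fun r _ => hterm y0 r) ⟨r0, Finset.mem_univ _, ?_⟩
    simp [h0, hp y0 r0]
  refine Finset.sum_pos' (fun y _ => Finset.sum_nonneg fun r _ => hterm y r)
    ⟨y0, Finset.mem_univ _, hinner⟩

lemma Pr_split (p : (Fin K → Bool) → (Fin K → Bool) → ℝ)
    (A : (Fin K → Bool) → (Fin K → Bool) → Prop) (j : Fin K) :
    Pr p A = Pr p (fun y r => A y r ∧ r j = true) + Pr p (fun y r => A y r ∧ r j = false) := by
  unfold Pr
  rw [← Finset.sum_add_distrib]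
  refine Finset.sum_congr rfl fun y _ => ?_
  rw [← Finset.sum_add_distrib]
  refine Finset.sum_congr rfl fun r _ => ?_
  by_cases hA : A y r <;> cases hrj : r j <;> simp [hA, hrj]

lemma Pr_mul_Pr_s3 (p : (Fin K → Bool) → (Fin K → Bool) → ℝ)
    (A B : (Fin K → Bool) → (Fin K → Bool) → Prop) :
    Pr p A * Pr p B
      = ∑ y : Fin K → Bool, ∑ r : Fin K → Bool, ∑ y' : Fin K → Bool, ∑ r' : Fin K → Bool,
          ind (A y r) (p y r) * ind (B y' r') (p y' r') := by
  have hPr : ∀ (C : (Fin K → Bool) → (Fin K → Bool) → Prop),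
      Pr p C = ∑ y : Fin K → Bool, ∑ r : Fin K → Bool, ind (C y r) (p y r) := by
    intro C
    unfold Pr
    refine Finset.sum_congr rfl fun y _ => Finset.sum_congr rfl fun r _ => ?_
    by_cases h : C y r <;> simp [ind, h]
  rw [hPr A, hPr B]
  rw [Finset.sum_mul]
  refine Finset.sum_congr rfl fun y _ => ?_
  rw [Finset.sum_mul]
  refine Finset.sum_congr rfl fun r _ => ?_
  rw [Finset.mul_sum]
  refine Finset.sum_congr rfl fun y' _ => ?_
  rw [Finset.mul_sum]

/-- Mixture of two configurations: positions `≤ k` (1-based) from `u`, the rest from `v`. -/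
def mix (k : ℕ) (u v : Fin K → Bool) : Fin K → Bool :=
  fun j => if j.1 + 1 ≤ k then u j else v j

lemma mix_left {k : ℕ} {u v : Fin K → Bool} {j : Fin K} (h : j.1 + 1 ≤ k) :
    mix k u v j = u j := if_pos h

lemma mix_right {k : ℕ} {u v : Fin K → Bool} {j : Fin K} (h : ¬ j.1 + 1 ≤ k) :
    mix k u v j = v j := if_neg h

lemma sum_mix_swap (k : ℕ) (G : (Fin K → Bool) → (Fin K → Bool) → ℝ) :
    (∑ u : Fin K → Bool, ∑ v : Fin K → Bool, G u v)
      = ∑ u : Fin K → Bool, ∑ v : Fin K → Bool, G (mix k v u) (mix k u v) := by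
  have hinv : Function.Involutive
      (fun t : (Fin K → Bool) × (Fin K → Bool) => (mix k t.2 t.1, mix k t.1 t.2)) := by
    rintro ⟨u, v⟩
    simp only [Prod.mk.injEq]
    constructor <;> funext j <;> by_cases h : j.1 + 1 ≤ k <;> simp [mix, h]
  calc (∑ u : Fin K → Bool, ∑ v : Fin K → Bool, G u v)
      = ∑ t : (Fin K → Bool) × (Fin K → Bool), G t.1 t.2 := by
        rw [Fintype.sum_prod_type]
    _ = ∑ t : (Fin K → Bool) × (Fin K → Bool), G (mix k t.2 t.1) (mix k t.1 t.2) :=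
        (Equiv.sum_comp hinv.toPerm (fun t : (Fin K → Bool) × (Fin K → Bool) => G t.1 t.2)).symm
    _ = _ := by rw [Fintype.sum_prod_type]

lemma Markov.p_pos (M : Markov K m) (y r : Fin K → Bool) : 0 < M.p y r := by
  rw [M.factor]
  exact Finset.prod_pos fun j _ => mul_pos (M.a_pos j y) (M.b_pos j y r)

lemma mix_low (M : Markov K m) (k : ℕ) (y r y' r' : Fin K → Bool)
    (hO : ∀ j : Fin K, k + 1 ≤ j.1 + 1 → j.1 + 1 ≤ k + m → obs y r j = obs y' r' j)
    (j : Fin K) (hj : j.1 + 1 ≤ k) :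
    M.a j (mix k y' y) * M.b j (mix k y' y) (mix k r' r) = M.a j y' * M.b j y' r' := by
  have ha : M.a j (mix k y' y) = M.a j y' :=
    M.a_local j _ _ (fun j' _ h2 => mix_left (by omega))
  have hb : M.b j (mix k y' y) (mix k r' r) = M.b j y' r' := by
    refine M.b_local j _ _ _ _ (mix_left hj) (fun j' _ h2 => mix_left (by omega)) ?_
    intro j' h1 h2
    by_cases hc : j'.1 + 1 ≤ k
    · simp [obs, mix, hc]
    · have e1 : obs (mix k y' y) (mix k r' r) j' = obs y r j' := by simp [obs, mix, hc]
      rw [e1]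
      exact hO j' (by omega) (by omega)
  rw [ha, hb]

lemma mix_high (M : Markov K m) (k : ℕ) (y r y' r' : Fin K → Bool)
    (hY : ∀ j : Fin K, k ≤ j.1 + 1 + m → j.1 + 1 ≤ k → y j = y' j)
    (j : Fin K) (hj : ¬ j.1 + 1 ≤ k) :
    M.a j (mix k y' y) * M.b j (mix k y' y) (mix k r' r) = M.a j y * M.b j y r := by
  have hy : ∀ j' : Fin K, j.1 + 1 - m ≤ j'.1 + 1 → j'.1 ≤ j.1 → mix k y' y j' = y j' := by
    intro j' h1 h2
    by_cases hc : j'.1 + 1 ≤ k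
    · rw [mix_left hc]
      exact (hY j' (by omega) hc).symm
    · exact mix_right hc
  have ha : M.a j (mix k y' y) = M.a j y := M.a_local j _ _ hy
  have hb : M.b j (mix k y' y) (mix k r' r) = M.b j y r := by
    refine M.b_local j _ _ _ _ (mix_right hj) hy ?_
    intro j' h1 h2
    have hc : ¬ j'.1 + 1 ≤ k := by omega
    simp [obs, mix, hc]
  rw [ha, hb]

lemma mix_prod (M : Markov K m) (k : ℕ) (y r y' r' : Fin K → Bool)
    (hY : ∀ j : Fin K, k ≤ j.1 + 1 + m → j.1 + 1 ≤ k → y j = y' j)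
    (hO : ∀ j : Fin K, k + 1 ≤ j.1 + 1 → j.1 + 1 ≤ k + m → obs y r j = obs y' r' j) :
    M.p (mix k y' y) (mix k r' r) * M.p (mix k y y') (mix k r r') = M.p y r * M.p y' r' := by
  classical
  have hsplit : ∀ (Y R : Fin K → Bool), M.p Y R =
      (∏ j ∈ Finset.univ.filter (fun j : Fin K => j.1 + 1 ≤ k), M.a j Y * M.b j Y R) *
        ∏ j ∈ Finset.univ.filter (fun j : Fin K => ¬ j.1 + 1 ≤ k), M.a j Y * M.b j Y R := by
    intro Y R
    rw [M.factor, Finset.prod_filter_mul_prod_filter_not]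
  have hY' : ∀ j : Fin K, k ≤ j.1 + 1 + m → j.1 + 1 ≤ k → y' j = y j :=
    fun j h1 h2 => (hY j h1 h2).symm
  have hO' : ∀ j : Fin K, k + 1 ≤ j.1 + 1 → j.1 + 1 ≤ k + m → obs y' r' j = obs y r j :=
    fun j h1 h2 => (hO j h1 h2).symm
  have e1 : (∏ j ∈ Finset.univ.filter (fun j : Fin K => j.1 + 1 ≤ k),
      M.a j (mix k y' y) * M.b j (mix k y' y) (mix k r' r))
      = ∏ j ∈ Finset.univ.filter (fun j : Fin K => j.1 + 1 ≤ k), M.a j y' * M.b j y' r' :=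
    Finset.prod_congr rfl fun j hj =>
      mix_low M k y r y' r' hO j (by simpa using (Finset.mem_filter.1 hj).2)
  have e2 : (∏ j ∈ Finset.univ.filter (fun j : Fin K => ¬ j.1 + 1 ≤ k),
      M.a j (mix k y' y) * M.b j (mix k y' y) (mix k r' r))
      = ∏ j ∈ Finset.univ.filter (fun j : Fin K => ¬ j.1 + 1 ≤ k), M.a j y * M.b j y r :=
    Finset.prod_congr rfl fun j hj =>
      mix_high M k y r y' r' hY j ((Finset.mem_filter.1 hj).2)
  have e3 : (∏ j ∈ Finset.univ.filter (fun j : Fin K => j.1 + 1 ≤ k),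
      M.a j (mix k y y') * M.b j (mix k y y') (mix k r r'))
      = ∏ j ∈ Finset.univ.filter (fun j : Fin K => j.1 + 1 ≤ k), M.a j y * M.b j y r :=
    Finset.prod_congr rfl fun j hj =>
      mix_low M k y' r' y r hO' j (by simpa using (Finset.mem_filter.1 hj).2)
  have e4 : (∏ j ∈ Finset.univ.filter (fun j : Fin K => ¬ j.1 + 1 ≤ k),
      M.a j (mix k y y') * M.b j (mix k y y') (mix k r r'))
      = ∏ j ∈ Finset.univ.filter (fun j : Fin K => ¬ j.1 + 1 ≤ k), M.a j y' * M.b j y' r' :=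
    Finset.prod_congr rfl fun j hj =>
      mix_high M k y' r' y r hY' j ((Finset.mem_filter.1 hj).2)
  rw [hsplit (mix k y' y) (mix k r' r), hsplit (mix k y y') (mix k r r'), hsplit y r,
    hsplit y' r', e1, e2, e3, e4]
  ring

lemma req_iff {k : ℕ} (jk : Fin K) (hjk : jk.1 + 1 = k) (c : Bool) (y r : Fin K → Bool) :
    Req k k (fun _ => c) y r ↔ r jk = c := by
  constructor
  · intro H
    exact H jk (by omega) (by omega)
  · intro H j h1 h2
    have : j = jk := Fin.ext (by omega)
    rw [this]
    exact H

lemma yeq_singleton {k : ℕ} (jk : Fin K) (hjk : jk.1 + 1 = k) (w : ℕ → Bool)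
    (y r : Fin K → Bool) :
    Yeq k k w y r ↔ y jk = w k := by
  constructor
  · intro H
    have := H jk (by omega) (by omega)
    rwa [hjk] at this
  · intro H j h1 h2
    have hj : j = jk := Fin.ext (by omega)
    rw [hj, hjk]
    exact H

lemma yeq_split {lo k : ℕ} (hk1 : 1 ≤ k) (hlo : lo ≤ k) (yv : ℕ → Bool)
    (y r : Fin K → Bool) :
    Yeq lo k yv y r ↔ Yeq lo (k - 1) yv y r ∧ Yeq k k yv y r := by
  constructor
  · intro H
    exact ⟨fun j h1 h2 => H j h1 (by omega), fun j h1 h2 => H j (by omega) h2⟩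
  · rintro ⟨H1, H2⟩ j h1 h2
    by_cases hc : j.1 + 1 ≤ k - 1
    · exact H1 j h1 hc
    · exact H2 j (by omega) h2

lemma oeq_split {lo n : ℕ} (hlo : lo ≤ n + 1) (ov : ℕ → Option Bool) (y r : Fin K → Bool) :
    Oeq lo (n + 1) ov y r ↔ Oeq lo n ov y r ∧ Oeq (n + 1) (n + 1) ov y r := by
  constructor
  · intro H
    exact ⟨fun j h1 h2 => H j h1 (by omega), fun j h1 h2 => H j (by omega) h2⟩
  · rintro ⟨H1, H2⟩ j h1 h2
    by_cases hc : j.1 + 1 ≤ n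
    · exact H1 j h1 hc
    · exact H2 j (by omega) h2

lemma yeq_mix {lo hi k : ℕ} (h : hi ≤ k) (yv : ℕ → Bool) (u v r : Fin K → Bool) :
    Yeq lo hi yv (mix k u v) r ↔ Yeq lo hi yv u r := by
  constructor <;> intro H j h1 h2 <;> have hh := H j h1 h2
  · rwa [mix_left (by omega)] at hh
  · rwa [mix_left (by omega)]

lemma oeq_mix {lo hi k : ℕ} (h : k + 1 ≤ lo) (ov : ℕ → Option Bool)
    (u v s t : Fin K → Bool) :
    Oeq lo hi ov (mix k u v) (mix k s t) ↔ Oeq lo hi ov v t := by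
  have hobs : ∀ j : Fin K, lo ≤ j.1 + 1 → obs (mix k u v) (mix k s t) j = obs v t j := by
    intro j h1
    have hc : ¬ j.1 + 1 ≤ k := by omega
    simp [obs, mix, hc]
  constructor <;> intro H j h1 h2 <;> have hh := H j h1 h2
  · rwa [hobs j h1] at hh
  · rwa [hobs j h1]

set_option maxHeartbeats 1000000 in
/-- The key conditional-independence step: given the past outcomes and the window of
observed data, the observed datum at position `k+m+1` is independent of `Rₖ`. -/
lemma swap_key (M : Markov K m) (k : ℕ) (jk : Fin K) (hjk : jk.1 + 1 = k)
    (yv : ℕ → Bool) (ov : ℕ → Option Bool) (ε ε' : Bool) :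
    Pr M.p (fun y r => Oeq (k + m + 1) (k + m + 1) ov y r ∧ Yeq (k - m) k yv y r ∧
        r jk = ε ∧ Oeq (k + 1) (k + m) ov y r)
      * Pr M.p (fun y r => Yeq (k - m) k yv y r ∧ r jk = ε' ∧ Oeq (k + 1) (k + m) ov y r)
    = Pr M.p (fun y r => Oeq (k + m + 1) (k + m + 1) ov y r ∧ Yeq (k - m) k yv y r ∧
        r jk = ε' ∧ Oeq (k + 1) (k + m) ov y r)
      * Pr M.p (fun y r => Yeq (k - m) k yv y r ∧ r jk = ε ∧ Oeq (k + 1) (k + m) ov y r) := by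
  classical
  have hjkle : jk.1 + 1 ≤ k := le_of_eq hjk
  rw [Pr_mul_Pr_s3, Pr_mul_Pr_s3]
  have ejk : ∀ s t : Fin K → Bool, mix k s t jk = s jk := fun s t => mix_left hjkle
  have hO1 : ∀ u v s t : Fin K → Bool,
      Oeq (k + m + 1) (k + m + 1) ov (mix k u v) (mix k s t) ↔
        Oeq (k + m + 1) (k + m + 1) ov v t :=
    fun u v s t => oeq_mix (by omega) ov u v s t
  have hO2 : ∀ u v s t : Fin K → Bool,
      Oeq (k + 1) (k + m) ov (mix k u v) (mix k s t) ↔ Oeq (k + 1) (k + m) ov v t :=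
    fun u v s t => oeq_mix (le_refl (k + 1)) ov u v s t
  have hY1 : ∀ u v r : Fin K → Bool,
      Yeq (k - m) k yv (mix k u v) r ↔ Yeq (k - m) k yv u r :=
    fun u v r => yeq_mix (le_refl k) yv u v r
  have pointwise : ∀ y r y' r' : Fin K → Bool,
      (ind (Oeq (k + m + 1) (k + m + 1) ov (mix k y' y) (mix k r' r) ∧ Yeq (k - m) k yv (mix k y' y) (mix k r' r) ∧
            ((mix k r' r)) jk = ε' ∧ Oeq (k + 1) (k + m) ov (mix k y' y) (mix k r' r)) (M.p (mix k y' y) (mix k r' r))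
        * ind (Yeq (k - m) k yv (mix k y y') (mix k r r') ∧ ((mix k r r')) jk = ε ∧ Oeq (k + 1) (k + m) ov (mix k y y') (mix k r r'))
            (M.p (mix k y y') (mix k r r')))
      = ind (Oeq (k + m + 1) (k + m + 1) ov y r ∧ Yeq (k - m) k yv y r ∧
            (r) jk = ε ∧ Oeq (k + 1) (k + m) ov y r) (M.p y r)
        * ind (Yeq (k - m) k yv y' r' ∧ (r') jk = ε' ∧ Oeq (k + 1) (k + m) ov y' r')
            (M.p y' r') := by
    intro y r y' r'
    have hiff :
        ((Oeq (k + m + 1) (k + m + 1) ov (mix k y' y) (mix k r' r) ∧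
            Yeq (k - m) k yv (mix k y' y) (mix k r' r) ∧
            (mix k r' r) jk = ε' ∧ Oeq (k + 1) (k + m) ov (mix k y' y) (mix k r' r)) ∧
          (Yeq (k - m) k yv (mix k y y') (mix k r r') ∧
            (mix k r r') jk = ε ∧ Oeq (k + 1) (k + m) ov (mix k y y') (mix k r r')))
        ↔ ((Oeq (k + m + 1) (k + m + 1) ov y r ∧ Yeq (k - m) k yv y r ∧
            r jk = ε ∧ Oeq (k + 1) (k + m) ov y r) ∧
          (Yeq (k - m) k yv y' r' ∧ r' jk = ε' ∧ Oeq (k + 1) (k + m) ov y' r')) := by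
      simp only [hO1, hO2, hY1, ejk]
      tauto
    by_cases h : (Oeq (k + m + 1) (k + m + 1) ov y r ∧ Yeq (k - m) k yv y r ∧
        r jk = ε ∧ Oeq (k + 1) (k + m) ov y r) ∧
        (Yeq (k - m) k yv y' r' ∧ r' jk = ε' ∧ Oeq (k + 1) (k + m) ov y' r')
    · have h' := hiff.2 h
      have hY : ∀ j : Fin K, k ≤ j.1 + 1 + m → j.1 + 1 ≤ k → y j = y' j := by
        intro j h1 h2
        rw [h.1.2.1 j (by omega) h2, h.2.1 j (by omega) h2]
      have hO : ∀ j : Fin K, k + 1 ≤ j.1 + 1 → j.1 + 1 ≤ k + m →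
          obs y r j = obs y' r' j := by
        intro j h1 h2
        rw [h.1.2.2.2 j h1 h2, h.2.2.2 j h1 h2]
      rw [ind_of_pos h.1, ind_of_pos h.2, ind_of_pos h'.1, ind_of_pos h'.2]
      exact mix_prod M k y r y' r' hY hO
    · have h' : ¬ _ := fun hh => h (hiff.1 hh)
      rw [ind_mul_ind_zero _ _ h', ind_mul_ind_zero (M.p y r) (M.p y' r') h]
  have reorder : ∀ (H : (Fin K → Bool) → (Fin K → Bool) → (Fin K → Bool) →
      (Fin K → Bool) → ℝ),
      (∑ y : Fin K → Bool, ∑ r : Fin K → Bool, ∑ y' : Fin K → Bool, ∑ r' : Fin K → Bool,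
        H y r y' r')
      = ∑ y : Fin K → Bool, ∑ y' : Fin K → Bool, ∑ r : Fin K → Bool, ∑ r' : Fin K → Bool,
        H y r y' r' :=
    fun H => Finset.sum_congr rfl fun y _ => Finset.sum_comm
  refine Eq.trans (reorder (fun y r y' r' =>
      ind (Oeq (k + m + 1) (k + m + 1) ov y r ∧ Yeq (k - m) k yv y r ∧
            (r) jk = ε ∧ Oeq (k + 1) (k + m) ov y r) (M.p y r)
        * ind (Yeq (k - m) k yv y' r' ∧ (r') jk = ε' ∧ Oeq (k + 1) (k + m) ov y' r')
            (M.p y' r')))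
    (Eq.trans ?_ (reorder (fun y r y' r' =>
      ind (Oeq (k + m + 1) (k + m + 1) ov y r ∧ Yeq (k - m) k yv y r ∧
            (r) jk = ε' ∧ Oeq (k + 1) (k + m) ov y r) (M.p y r)
        * ind (Yeq (k - m) k yv y' r' ∧ (r') jk = ε ∧ Oeq (k + 1) (k + m) ov y' r')
            (M.p y' r'))).symm)
  have step : ∀ y y' : Fin K → Bool,
      (∑ r : Fin K → Bool, ∑ r' : Fin K → Bool,
        ind (Oeq (k + m + 1) (k + m + 1) ov y r ∧ Yeq (k - m) k yv y r ∧
            (r) jk = ε ∧ Oeq (k + 1) (k + m) ov y r) (M.p y r)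
        * ind (Yeq (k - m) k yv y' r' ∧ (r') jk = ε' ∧ Oeq (k + 1) (k + m) ov y' r')
            (M.p y' r'))
      = ∑ r : Fin K → Bool, ∑ r' : Fin K → Bool,
        ind (Oeq (k + m + 1) (k + m + 1) ov (mix k y' y) r ∧ Yeq (k - m) k yv (mix k y' y) r ∧
            (r) jk = ε' ∧ Oeq (k + 1) (k + m) ov (mix k y' y) r) (M.p (mix k y' y) r)
        * ind (Yeq (k - m) k yv (mix k y y') r' ∧ (r') jk = ε ∧ Oeq (k + 1) (k + m) ov (mix k y y') r')
            (M.p (mix k y y') r') := by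
    intro y y'
    refine Eq.trans ?_ (sum_mix_swap k (fun s t =>
        ind (Oeq (k + m + 1) (k + m + 1) ov (mix k y' y) s ∧ Yeq (k - m) k yv (mix k y' y) s ∧
            (s) jk = ε' ∧ Oeq (k + 1) (k + m) ov (mix k y' y) s) (M.p (mix k y' y) s)
        * ind (Yeq (k - m) k yv (mix k y y') t ∧ (t) jk = ε ∧ Oeq (k + 1) (k + m) ov (mix k y y') t)
            (M.p (mix k y y') t))).symm
    exact Finset.sum_congr rfl fun r _ => Finset.sum_congr rfl fun r' _ =>
      (pointwise y r y' r').symm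
  refine Eq.trans (Finset.sum_congr rfl fun y _ => Finset.sum_congr rfl fun y' _ => step y y')
    (sum_mix_swap k (fun u u' => ∑ s : Fin K → Bool, ∑ t : Fin K → Bool,
        ind (Oeq (k + m + 1) (k + m + 1) ov u s ∧ Yeq (k - m) k yv u s ∧
            (s) jk = ε' ∧ Oeq (k + 1) (k + m) ov u s) (M.p u s)
        * ind (Yeq (k - m) k yv u' t ∧ (t) jk = ε ∧ Oeq (k + 1) (k + m) ov u' t)
            (M.p u' t))).symm

/-- A configuration realizing given values of `Yₖ`, `Rₖ`, `Ȳᵐₖ` and `O̲ᵐₖ`. -/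
lemma witness {k : ℕ} (hk1 : 1 ≤ k) (hk2 : k ≤ K) (yv : ℕ → Bool) (ov : ℕ → Option Bool)
    (v ε : Bool) :
    ∃ y r : Fin K → Bool, Yeq k k (fun _ => v) y r ∧ Req k k (fun _ => ε) y r ∧
      Yeq (k - m) (k - 1) yv y r ∧ Oeq (k + 1) (k + m) ov y r := by
  refine ⟨fun j => if j.1 + 1 = k then v else
      (if k + 1 ≤ j.1 + 1 then (ov (j.1 + 1)).getD true else yv (j.1 + 1)),
    fun j => if j.1 + 1 = k then ε else
      (if k + 1 ≤ j.1 + 1 then (ov (j.1 + 1)).isSome else true), ?_, ?_, ?_, ?_⟩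
  · intro j h1 h2
    have hj : j.1 + 1 = k := by omega
    simp [hj]
  · intro j h1 h2
    have hj : j.1 + 1 = k := by omega
    simp [hj]
  · intro j h1 h2
    have e1 : ¬ j.1 + 1 = k := by omega
    have e2 : ¬ k + 1 ≤ j.1 + 1 := by omega
    simp [e1, e2]
  · intro j h1 h2
    have e1 : ¬ j.1 + 1 = k := by omega
    cases hov : ov (j.1 + 1) <;> simp [obs, e1, h1, hov]

end Aux


set_option maxHeartbeats 4000000 in
/-- **Lemma 3, recursive identity.** Under the `m`th-order Markov model together with the
exponential tilting restriction, for every `k = 1, …, K` and all values of the variables,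
`f(Ȳ^{m+1}_{k+1}, O̲^{m+1}_k)
  = [f(O_{k+m+1} | Rₖ = 1, Ȳ^{m+1}_{k+1}, O̲ᵐₖ)]^{1(k ≤ K−m−1)}
    · f(Yₖ | Rₖ = 1, Ȳᵐₖ, O̲ᵐₖ)
    · { P(Rₖ = 1 | Ȳᵐₖ, O̲ᵐₖ) + P(Rₖ = 0 | Ȳᵐₖ, O̲ᵐₖ) · exp(αₖ Yₖ) / cₖ(Ȳᵐₖ, O̲ᵐₖ; αₖ) }
    · f(Ȳᵐₖ, O̲ᵐₖ)`.
The windows `O̲^{m+1}_k = (O_{k+1}, …, O_{min(k+m+1,K)})` and `O̲ᵐₖ = (O_{k+1}, …, O_{min(k+m,K)})`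
are truncated at `K` automatically by `Oeq`. -/
theorem statement3 (K m : ℕ) (hm : 1 ≤ m) (hKm : 2 * m + 1 < K)
    (M : Markov K m) (α : ℕ → ℝ) (hT : Tilt M.p m α)
    (k : ℕ) (hk1 : 1 ≤ k) (hk2 : k ≤ K)
    (yv : ℕ → Bool) (ov : ℕ → Option Bool) :
    Pr M.p (fun y r => Yeq (k - m) k yv y r ∧ Oeq (k + 1) (k + m + 1) ov y r)
      = (if k ≤ K - m - 1 then
            cPr M.p (Oeq (k + m + 1) (k + m + 1) ov)
              (fun y r => Req k k (fun _ => true) y r ∧ Yeq (k - m) k yv y r ∧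
                Oeq (k + 1) (k + m) ov y r)
          else 1)
        * cPr M.p (Yeq k k yv)
            (fun y r => Req k k (fun _ => true) y r ∧ Yeq (k - m) (k - 1) yv y r ∧
              Oeq (k + 1) (k + m) ov y r)
        * (cPr M.p (Req k k (fun _ => true))
              (fun y r => Yeq (k - m) (k - 1) yv y r ∧ Oeq (k + 1) (k + m) ov y r)
            + cPr M.p (Req k k (fun _ => false))
                (fun y r => Yeq (k - m) (k - 1) yv y r ∧ Oeq (k + 1) (k + m) ov y r)
              * Real.exp (α k * yVal (yv k)) / cfun M.p m (α k) k yv ov)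
        * Pr M.p (fun y r => Yeq (k - m) (k - 1) yv y r ∧ Oeq (k + 1) (k + m) ov y r) := by
  classical
  have hkK : k - 1 < K := by omega
  set jk : Fin K := ⟨k - 1, hkK⟩ with hjkdef
  have hjk : jk.1 + 1 = k := by
    show k - 1 + 1 = k
    omega
  have hp : ∀ y r : Fin K → Bool, 0 < M.p y r := M.p_pos
  set ee : ℝ := Real.exp (α k * yVal (yv k)) with hee_def
  set c : ℝ := cfun M.p m (α k) k yv ov with hc_def
  -- canonical probabilities
  set d : ℝ := Pr M.p (fun y r => Yeq (k - m) (k - 1) yv y r ∧ Oeq (k + 1) (k + m) ov y r)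
    with hd_def
  set d1 : ℝ := Pr M.p (fun y r =>
    (Yeq (k - m) (k - 1) yv y r ∧ Oeq (k + 1) (k + m) ov y r) ∧ r jk = true) with hd1_def
  set d0 : ℝ := Pr M.p (fun y r =>
    (Yeq (k - m) (k - 1) yv y r ∧ Oeq (k + 1) (k + m) ov y r) ∧ r jk = false) with hd0_def
  set n1 : ℝ := Pr M.p (fun y r =>
    Yeq (k - m) k yv y r ∧ r jk = true ∧ Oeq (k + 1) (k + m) ov y r) with hn1_def
  set n0 : ℝ := Pr M.p (fun y r =>
    Yeq (k - m) k yv y r ∧ r jk = false ∧ Oeq (k + 1) (k + m) ov y r) with hn0_def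
  set q1 : ℝ := Pr M.p (fun y r => Oeq (k + m + 1) (k + m + 1) ov y r ∧
    Yeq (k - m) k yv y r ∧ r jk = true ∧ Oeq (k + 1) (k + m) ov y r) with hq1_def
  set q0 : ℝ := Pr M.p (fun y r => Oeq (k + m + 1) (k + m + 1) ov y r ∧
    Yeq (k - m) k yv y r ∧ r jk = false ∧ Oeq (k + 1) (k + m) ov y r) with hq0_def
  have hklem : k - m ≤ k := Nat.sub_le k m
  have hkm1 : k + 1 ≤ k + m + 1 := by omega
  -- positivity
  have hwit : ∀ v ε : Bool, ∃ y r : Fin K → Bool,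
      Yeq k k (fun _ => v) y r ∧ Req k k (fun _ => ε) y r ∧
      Yeq (k - m) (k - 1) yv y r ∧ Oeq (k + 1) (k + m) ov y r :=
    fun v ε => witness hk1 hk2 yv ov v ε
  have hYa_of : ∀ (y r : Fin K → Bool), Yeq k k (fun _ => yv k) y r →
      Yeq (k - m) (k - 1) yv y r → Yeq (k - m) k yv y r := by
    intro y r h1 h2
    refine (yeq_split hk1 hklem yv y r).2 ⟨h2, ?_⟩
    exact (yeq_singleton jk hjk yv y r).2 ((yeq_singleton jk hjk (fun _ => yv k) y r).1 h1)
  have hd_pos : 0 < d := by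
    obtain ⟨y, r, h1, h2, h3, h4⟩ := hwit true true
    exact Pr_pos hp ⟨y, r, h3, h4⟩
  have hd1_pos : 0 < d1 := by
    obtain ⟨y, r, h1, h2, h3, h4⟩ := hwit true true
    exact Pr_pos hp ⟨y, r, ⟨h3, h4⟩, (req_iff jk hjk true y r).1 h2⟩
  have hd0_pos : 0 < d0 := by
    obtain ⟨y, r, h1, h2, h3, h4⟩ := hwit true false
    exact Pr_pos hp ⟨y, r, ⟨h3, h4⟩, (req_iff jk hjk false y r).1 h2⟩
  have hn1_pos : 0 < n1 := by
    obtain ⟨y, r, h1, h2, h3, h4⟩ := hwit (yv k) true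
    exact Pr_pos hp ⟨y, r, hYa_of y r h1 h3, (req_iff jk hjk true y r).1 h2, h4⟩
  have hc_pos : 0 < c := by
    rw [hc_def]
    unfold cfun
    refine Finset.sum_pos (fun v _ => ?_) ⟨true, Finset.mem_univ true⟩
    refine mul_pos (Real.exp_pos _) ?_
    unfold cPr
    refine div_pos ?_ ?_
    · obtain ⟨y, r, h1, h2, h3, h4⟩ := hwit v true
      exact Pr_pos hp ⟨y, r, h1, h2, h3, h4⟩
    · obtain ⟨y, r, h1, h2, h3, h4⟩ := hwit true true
      exact Pr_pos hp ⟨y, r, h2, h3, h4⟩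
  -- the tilting identity in algebraic form
  have e_num : ∀ ε : Bool, Pr M.p (fun y r => Yeq k k yv y r ∧
      (Req k k (fun _ => ε) y r ∧ Yeq (k - m) (k - 1) yv y r ∧
        Oeq (k + 1) (k + m) ov y r))
      = Pr M.p (fun y r =>
        Yeq (k - m) k yv y r ∧ r jk = ε ∧ Oeq (k + 1) (k + m) ov y r) := by
    intro ε
    refine Pr_congr M.p fun y r => ?_
    simp only [yeq_split hk1 hklem yv, req_iff jk hjk]
    tauto
  have e_den : ∀ ε : Bool, Pr M.p (fun y r => Req k k (fun _ => ε) y r ∧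
      Yeq (k - m) (k - 1) yv y r ∧ Oeq (k + 1) (k + m) ov y r)
      = Pr M.p (fun y r =>
        (Yeq (k - m) (k - 1) yv y r ∧ Oeq (k + 1) (k + m) ov y r) ∧ r jk = ε) := by
    intro ε
    refine Pr_congr M.p fun y r => ?_
    simp only [req_iff jk hjk]
    tauto
  have htilt : n0 / d0 = n1 / d1 * ee / c := by
    have h := hT k hk1 hk2 yv ov
    simp only [cPr] at h
    rw [e_num false, e_num true, e_den false, e_den true] at h
    exact h
  have htp : n0 * (d1 * c) = n1 * ee * d0 := by
    field_simp [hd0_pos.ne', hd1_pos.ne', hc_pos.ne'] at htilt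
    linarith [htilt]
  -- the swap identity
  have hswap : q1 * n0 = q0 * n1 := swap_key M k jk hjk yv ov true false
  -- rewrite the three conditional probabilities in the goal
  have eq2 : cPr M.p (Yeq k k yv)
      (fun y r => Req k k (fun _ => true) y r ∧ Yeq (k - m) (k - 1) yv y r ∧
        Oeq (k + 1) (k + m) ov y r) = n1 / d1 := by
    simp only [cPr]
    rw [e_num true, e_den true]
  have eq3 : cPr M.p (Req k k (fun _ => true))
      (fun y r => Yeq (k - m) (k - 1) yv y r ∧ Oeq (k + 1) (k + m) ov y r) = d1 / d := by
    simp only [cPr]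
    rw [hd1_def, hd_def]
    congr 1
    refine Pr_congr M.p fun y r => ?_
    simp only [req_iff jk hjk]
    tauto
  have eq4 : cPr M.p (Req k k (fun _ => false))
      (fun y r => Yeq (k - m) (k - 1) yv y r ∧ Oeq (k + 1) (k + m) ov y r) = d0 / d := by
    simp only [cPr]
    rw [hd0_def, hd_def]
    congr 1
    refine Pr_congr M.p fun y r => ?_
    simp only [req_iff jk hjk]
    tauto
  rw [eq2, eq3, eq4]
  by_cases hcase : k ≤ K - m - 1
  · rw [if_pos hcase]
    have eqT : cPr M.p (Oeq (k + m + 1) (k + m + 1) ov)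
        (fun y r => Req k k (fun _ => true) y r ∧ Yeq (k - m) k yv y r ∧
          Oeq (k + 1) (k + m) ov y r) = q1 / n1 := by
      simp only [cPr]
      rw [hq1_def, hn1_def]
      congr 1
      · refine Pr_congr M.p fun y r => ?_
        simp only [req_iff jk hjk]
        tauto
      · refine Pr_congr M.p fun y r => ?_
        simp only [req_iff jk hjk]
        tauto
    rw [eqT]
    have hL : Pr M.p (fun y r => Yeq (k - m) k yv y r ∧ Oeq (k + 1) (k + m + 1) ov y r)
        = q1 + q0 := by
      rw [Pr_split M.p (fun y r => Yeq (k - m) k yv y r ∧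
        Oeq (k + 1) (k + m + 1) ov y r) jk]
      rw [hq1_def, hq0_def]
      congr 1
      · refine Pr_congr M.p fun y r => ?_
        simp only [oeq_split hkm1 ov]
        tauto
      · refine Pr_congr M.p fun y r => ?_
        simp only [oeq_split hkm1 ov]
        tauto
    rw [hL]
    have h1 : n1 * (q0 * (d1 * c)) = n1 * (q1 * (d0 * ee)) := by
      linear_combination (-(d1 * c)) * hswap + q1 * htp
    have hq : q0 * (d1 * c) = q1 * (d0 * ee) := mul_left_cancel₀ hn1_pos.ne' h1
    field_simp
    ring_nf
    linear_combination hq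
  · rw [if_neg hcase]
    have hOtriv : ∀ (y r : Fin K → Bool), Oeq (k + m + 1) (k + m + 1) ov y r := by
      intro y r j h1 h2
      have := j.2
      omega
    have hL : Pr M.p (fun y r => Yeq (k - m) k yv y r ∧ Oeq (k + 1) (k + m + 1) ov y r)
        = n1 + n0 := by
      rw [Pr_split M.p (fun y r => Yeq (k - m) k yv y r ∧
        Oeq (k + 1) (k + m + 1) ov y r) jk]
      rw [hn1_def, hn0_def]
      congr 1
      · refine Pr_congr M.p fun y r => ?_
        simp only [oeq_split hkm1 ov]
        have := hOtriv y r
        tauto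
      · refine Pr_congr M.p fun y r => ?_
        simp only [oeq_split hkm1 ov]
        have := hOtriv y r
        tauto
    rw [hL]
    field_simp
    ring_nf
    linear_combination htp

end MRM
end

section
/- (Equivalence of the two exponential-tilting representations.) Let c(w) = E[exp(αY) | R = 1, W = w]. The following two conditions are equivalent: (i) for all w and all y ∈ {0,1}, logit P(R = 0 | W = w, Y = y) = logit P(R = 0 | W = w) − log c(w) + α y; (ii) for all w and all y ∈ {0,1}, f(Y = y | R = 0, W = w) = f(Y = y | R = 1, W = w) · exp(α y) / c(w). -/
open scoped Classical BigOperators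

namespace TiltEquiv

variable {W : Type*} [Fintype W]

/-- Probability of an event under a joint pmf `q` of `(Y, R, W)` with `Y, R` binary. -/
noncomputable def Pr (q : Bool → Bool → W → ℝ) (E : Bool → Bool → W → Prop) : ℝ :=
  ∑ y : Bool, ∑ r : Bool, ∑ w : W, if E y r w then q y r w else 0

/-- Conditional probability `P(A | C)`. -/
noncomputable def cPr (q : Bool → Bool → W → ℝ) (A C : Bool → Bool → W → Prop) : ℝ :=
  Pr q (fun y r w => A y r w ∧ C y r w) / Pr q C

/-- Real value of a binary outcome. -/
def yVal (v : Bool) : ℝ := if v then 1 else 0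

/-- `logit u = log (u / (1 − u))`. -/
noncomputable def logit (u : ℝ) : ℝ := Real.log (u / (1 - u))

lemma logit_frac {a b : ℝ} (ha : 0 < a) (hb : 0 < b) :
    logit (a/(a+b)) = Real.log a - Real.log b := by
  have hab : a + b ≠ 0 := by positivity
  have h1 : 1 - a/(a+b) = b/(a+b) := by field_simp; ring
  have h2 : (a/(a+b))/(b/(a+b)) = a/b := by field_simp
  rw [logit, h1, h2, Real.log_div ha.ne' hb.ne']

lemma core {a b c0 c1 C : ℝ} (ha : 0 < a) (hb : 0 < b) (h0 : 0 < c0) (h1 : 0 < c1)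
    (hC : 0 < C) (t : ℝ) :
    (Real.log a - Real.log b = Real.log c0 - Real.log c1 - Real.log C + t) ↔
      (a / c0 = b / c1 * Real.exp t / C) := by
  have hL : 0 < a / c0 := by positivity
  have hR : 0 < b / c1 * Real.exp t / C := by positivity
  have hl : a / c0 = b / c1 * Real.exp t / C ↔
      Real.log (a / c0) = Real.log (b / c1 * Real.exp t / C) := by
    constructor
    · intro h; rw [h]
    · intro h
      have := congrArg Real.exp h
      rwa [Real.exp_log hL, Real.exp_log hR] at this
  rw [hl, Real.log_div ha.ne' h0.ne',
    Real.log_div (by positivity : (b / c1 * Real.exp t) ≠ 0) hC.ne',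
    Real.log_mul (by positivity : (b / c1) ≠ 0) (Real.exp_pos t).ne',
    Real.log_div hb.ne' h1.ne', Real.log_exp]
  constructor <;> intro h <;> linarith

/-- Equivalence of the two exponential-tilting representations.
Let `c w = E[exp(α Y) | R = 1, W = w]`.  The following are equivalent:
(i) for all `w` and `y ∈ {0,1}`,
    `logit P(R = 0 | W = w, Y = y) = logit P(R = 0 | W = w) − log (c w) + α y`;
(ii) for all `w` and `y ∈ {0,1}`,
    `f(Y = y | R = 0, W = w) = f(Y = y | R = 1, W = w) · exp(α y) / c w`. -/
theorem statement5 (q : Bool → Bool → W → ℝ) (hq : ∀ y r w, 0 < q y r w)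
    (hsum : ∑ y : Bool, ∑ r : Bool, ∑ w : W, q y r w = 1) (α : ℝ) (c : W → ℝ)
    (hc : ∀ w : W, c w
        = ∑ v : Bool, Real.exp (α * yVal v) *
            cPr q (fun y _ _ => y = v) (fun _ r w' => r = true ∧ w' = w)) :
    (∀ (w : W) (v : Bool),
        logit (cPr q (fun _ r _ => r = false) (fun y _ w' => y = v ∧ w' = w))
          = logit (cPr q (fun _ r _ => r = false) (fun _ _ w' => w' = w))
              - Real.log (c w) + α * yVal v)
      ↔
    (∀ (w : W) (v : Bool),
        cPr q (fun y _ _ => y = v) (fun _ r w' => r = false ∧ w' = w)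
          = cPr q (fun y _ _ => y = v) (fun _ r w' => r = true ∧ w' = w)
              * Real.exp (α * yVal v) / c w) := by
  have key : ∀ (w : W) (v : Bool),
      (logit (cPr q (fun _ r _ => r = false) (fun y _ w' => y = v ∧ w' = w))
          = logit (cPr q (fun _ r _ => r = false) (fun _ _ w' => w' = w))
              - Real.log (c w) + α * yVal v)
        ↔
      (cPr q (fun y _ _ => y = v) (fun _ r w' => r = false ∧ w' = w)
          = cPr q (fun y _ _ => y = v) (fun _ r w' => r = true ∧ w' = w)
              * Real.exp (α * yVal v) / c w) := by
    intro w v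
    set a0 := q false false w with ha0
    set a1 := q true false w with ha1
    set b0 := q false true w with hb0
    set b1 := q true true w with hb1
    have pa0 : 0 < a0 := hq _ _ _
    have pa1 : 0 < a1 := hq _ _ _
    have pb0 : 0 < b0 := hq _ _ _
    have pb1 : 0 < b1 := hq _ _ _
    have hA : cPr q (fun _ r _ => r = false) (fun y _ w' => y = v ∧ w' = w)
        = q v false w / (q v false w + q v true w) := by
      cases v <;>
        simp [cPr, Pr, Fintype.sum_bool, Finset.sum_ite_eq', ← ha0, ← ha1, ← hb0, ← hb1] <;> ring
    have hB : cPr q (fun _ r _ => r = false) (fun _ _ w' => w' = w)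
        = (a0 + a1) / ((a0 + a1) + (b0 + b1)) := by
      simp [cPr, Pr, Fintype.sum_bool, Finset.sum_ite_eq', ← ha0, ← ha1, ← hb0, ← hb1]
      ring
    have hF0 : cPr q (fun y _ _ => y = v) (fun _ r w' => r = false ∧ w' = w)
        = q v false w / (a0 + a1) := by
      cases v <;>
        simp [cPr, Pr, Fintype.sum_bool, Finset.sum_ite_eq', ← ha0, ← ha1, ← hb0, ← hb1] <;> ring
    have hF1 : cPr q (fun y _ _ => y = v) (fun _ r w' => r = true ∧ w' = w)
        = q v true w / (b0 + b1) := by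
      cases v <;>
        simp [cPr, Pr, Fintype.sum_bool, Finset.sum_ite_eq', ← ha0, ← ha1, ← hb0, ← hb1] <;> ring
    have hcw : c w = (b0 + Real.exp α * b1) / (b0 + b1) := by
      rw [hc w]
      have h0 : cPr q (fun y _ _ => y = false) (fun _ r w' => r = true ∧ w' = w)
          = b0 / (b0 + b1) := by
        simp [cPr, Pr, Fintype.sum_bool, Finset.sum_ite_eq', ← hb0, ← hb1]
        ring
      have h1 : cPr q (fun y _ _ => y = true) (fun _ r w' => r = true ∧ w' = w)
          = b1 / (b0 + b1) := by
        simp [cPr, Pr, Fintype.sum_bool, Finset.sum_ite_eq', ← hb0, ← hb1]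
        ring
      simp [Fintype.sum_bool, h0, h1, yVal]
      field_simp
      ring
    have pC : 0 < c w := by rw [hcw]; positivity
    have pa : 0 < q v false w := hq _ _ _
    have pb : 0 < q v true w := hq _ _ _
    rw [hA, hB, hF0, hF1, logit_frac pa pb, logit_frac (by positivity) (by positivity)]
    exact core pa pb (by positivity) (by positivity) pC (α * yVal v)
  exact ⟨fun h w v => (key w v).1 (h w v), fun h w v => (key w v).2 (h w v)⟩


end TiltEquiv
end
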